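/- Let k be a positive integer and R = ℚ[h_1,…,h_k]. For every k-bounded partition λ of an integer N, the element ~h_λ satisfies ~h_λ = h_λ + Σ_{μ > λ} d_{μλ} h_μ for some rational coefficients d_{μλ}, where the sum runs over k-bounded partitions μ of N that are strictly greater than λ in dominance order. -/

import Mathlib

open MvPolynomial

/-- A partition: a weakly decreasing list of positive integers
(parts listed from largest to smallest). -/
def IsPartitionList (l : List ℕ) : Prop :=
  l.Pairwise (· ≥ ·) ∧ ∀ x ∈ l, 0 < x

/-- A `k`-bounded partition: a partition all of whose parts are at most `k`. -/
def IsKBoundedPartition (k : ℕ) (l : List ℕ) : Prop :=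
  IsPartitionList l ∧ ∀ x ∈ l, x ≤ k

/-- A `k`-bounded partition is `k`-irreducible if, for each `j = 1, …, k`, it has
at most `k - j` parts equal to `j` (in particular no part equal to `k`). -/
def IsKIrreducible (k : ℕ) (l : List ℕ) : Prop :=
  IsKBoundedPartition k l ∧ ∀ j, 1 ≤ j → j ≤ k → l.count j ≤ k - j

/-- The generator `h_m` of `R = ℚ[h_1, …, h_k]` (realized as the polynomial ring
in the `k` indeterminates `X 0 = h_1, …, X (k-1) = h_k`), with the conventions
`h_0 = 1` and `h_m = 0` for `m < 0` or `m > k`. -/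
noncomputable def hElem (k : ℕ) (m : ℤ) : MvPolynomial (Fin k) ℚ :=
  if hm : 1 ≤ m ∧ m ≤ (k : ℤ) then X ⟨m.toNat - 1, by omega⟩
  else if m = 0 then 1 else 0

/-- The `k`-rectangular Schur polynomial `S_{(ℓ^{k+1-ℓ})}`, given by the
Jacobi–Trudi determinant `det (h_{ℓ - i + j})_{1 ≤ i, j ≤ k+1-ℓ}`. -/
noncomputable def rectSchur (k ℓ : ℕ) : MvPolynomial (Fin k) ℚ :=
  (Matrix.of fun i j : Fin (k + 1 - ℓ) =>
    hElem k ((ℓ : ℤ) - (((i : ℕ) : ℤ) + 1) + (((j : ℕ) : ℤ) + 1))).det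

/-- The ideal `I_k` of `R = ℚ[h_1, …, h_k]` generated by the `k`-rectangular
Schur polynomials `S_{(ℓ^{k+1-ℓ})}`, `ℓ = 1, …, k`. -/
noncomputable def rectIdeal (k : ℕ) : Ideal (MvPolynomial (Fin k) ℚ) :=
  Ideal.span (rectSchur k '' Set.Icc 1 k)

/-- For a `k`-bounded partition `λ = (λ_1, …, λ_n)`, the product
`h_λ = h_{λ_1} ⋯ h_{λ_n}`. -/
noncomputable def hProd (k : ℕ) (l : List ℕ) : MvPolynomial (Fin k) ℚ :=
  (l.map fun m => hElem k (m : ℤ)).prod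

/-- `~h_λ = S_{R_1} ⋯ S_{R_n} · h_μ`, where `λ = μ ∪ R_1 ∪ ⋯ ∪ R_n` is the
unique decomposition of the `k`-bounded partition `λ` into a `k`-irreducible
partition `μ` and `k`-rectangles: for each part size `j`, the multiplicity
`λ.count j` is split by Euclidean division by `k+1-j` into `λ.count j / (k+1-j)`
copies of the `k`-rectangle `(j^{k+1-j})`, each contributing a factor
`S_{(j^{k+1-j})}`, and a remainder `λ.count j % (k+1-j) ≤ k-j` of parts equal to
`j` left in `μ`, contributing a factor `h_j^{λ.count j % (k+1-j)}`. -/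
noncomputable def hTilde (k : ℕ) (l : List ℕ) : MvPolynomial (Fin k) ℚ :=
  ∏ j ∈ Finset.Icc 1 k,
    rectSchur k j ^ (l.count j / (k + 1 - j)) *
      hElem k (j : ℤ) ^ (l.count j % (k + 1 - j))

/-- `μ` dominates `l`: every partial sum of `μ` is at least the corresponding
partial sum of `l`. -/
def Dominates (μ l : List ℕ) : Prop :=
  ∀ i, (l.take i).sum ≤ (μ.take i).sum


namespace HT

/-- Sort a list of naturals in weakly decreasing order. -/
def sortDesc (l : List ℕ) : List ℕ := l.mergeSort (fun a b => decide (b ≤ a))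

lemma sortDesc_perm (l : List ℕ) : (sortDesc l).Perm l := List.mergeSort_perm l _

lemma sortDesc_sorted (l : List ℕ) : (sortDesc l).Pairwise (· ≥ ·) := by
  have h := List.pairwise_mergeSort (le := fun a b : ℕ => decide (b ≤ a))
    (by intro a b c hab hbc; simp only [decide_eq_true_eq] at *; omega)
    (by intro a b; simp only [Bool.or_eq_true, decide_eq_true_eq]; omega) l
  exact List.Pairwise.imp (by intro a b h; simpa using h) h

lemma sortDesc_eq_of_sorted {l : List ℕ} (h : l.Pairwise (· ≥ ·)) : sortDesc l = l :=
  List.Perm.eq_of_pairwise' (sortDesc_sorted l) h (sortDesc_perm l)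

lemma sortDesc_append_comm (a b : List ℕ) : sortDesc (a ++ b) = sortDesc (b ++ a) :=
  List.Perm.eq_of_pairwise'
    (sortDesc_sorted _) (sortDesc_sorted _)
    (((sortDesc_perm _).trans (List.perm_append_comm)).trans (sortDesc_perm _).symm)

lemma sum_take_le_sum (l : List ℕ) (p : ℕ) : (l.take p).sum ≤ l.sum := by
  conv_rhs => rw [← List.take_append_drop p l]
  rw [List.sum_append]; omega

/-- The statistic `D i l = Σ_{x ∈ l} (x ∸ i)`. -/
def dstat (i : ℕ) (l : List ℕ) : ℕ := (l.map (fun x => x - i)).sum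

@[simp] lemma dstat_nil (i : ℕ) : dstat i [] = 0 := rfl

@[simp] lemma dstat_cons (i x : ℕ) (l : List ℕ) :
    dstat i (x :: l) = (x - i) + dstat i l := rfl

lemma dstat_append (i : ℕ) (a b : List ℕ) :
    dstat i (a ++ b) = dstat i a + dstat i b := by
  simp [dstat]

lemma dstat_perm (i : ℕ) {a b : List ℕ} (h : a.Perm b) : dstat i a = dstat i b :=
  (h.map _).sum_eq

lemma dstat_sortDesc (i : ℕ) (l : List ℕ) : dstat i (sortDesc l) = dstat i l :=
  dstat_perm i (sortDesc_perm l)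

lemma dstat_replicate (i n j : ℕ) : dstat i (List.replicate n j) = n * (j - i) := by
  simp [dstat, List.map_replicate, List.sum_replicate]

lemma dstat_sublist (i : ℕ) {a b : List ℕ} (h : a.Sublist b) : dstat i a ≤ dstat i b := by
  induction h with
  | slnil => exact le_rfl
  | cons x _ ih => simp only [dstat_cons]; omega
  | cons_cons x _ ih => simp only [dstat_cons]; omega

lemma dstat_eq_zero {i : ℕ} {l : List ℕ} (h : ∀ x ∈ l, x ≤ i) : dstat i l = 0 := by
  induction l with
  | nil => rfl
  | cons x t ih =>
      have hx := h x (by simp)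
      have := ih (fun y hy => h y (by simp [hy]))
      simp only [dstat_cons]; omega

lemma sum_le_dstat_add (i : ℕ) (l : List ℕ) : l.sum ≤ dstat i l + l.length * i := by
  induction l with
  | nil => simp
  | cons x t ih =>
      simp only [List.sum_cons, dstat_cons, List.length_cons, Nat.succ_mul]
      omega

lemma dstat_add_of_le {i : ℕ} {l : List ℕ} (h : ∀ x ∈ l, i ≤ x) :
    dstat i l + l.length * i = l.sum := by
  induction l with
  | nil => simp
  | cons x t ih =>
      have hx := h x (by simp)
      have := ih (fun y hy => h y (by simp [hy]))
      simp only [List.sum_cons, dstat_cons, List.length_cons, Nat.succ_mul]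
      omega

lemma dstat_filter_pos (i : ℕ) (l : List ℕ) :
    dstat i (l.filter (fun x => decide (0 < x))) = dstat i l := by
  induction l with
  | nil => rfl
  | cons x t ih =>
      by_cases hx : 0 < x
      · simp [List.filter_cons, hx, ih]
      · have : x = 0 := by omega
        subst this
        simp [List.filter_cons, ih]

lemma sum_filter_pos (l : List ℕ) :
    (l.filter (fun x => decide (0 < x))).sum = l.sum := by
  induction l with
  | nil => rfl
  | cons x t ih =>
      by_cases hx : 0 < x
      · simp [List.filter_cons, hx, ih]
      · have : x = 0 := by omega
        subst this
        simp [List.filter_cons, ih]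

/-- number of parts that are at least `i` -/
def nstat (i : ℕ) (l : List ℕ) : ℕ := (l.filter (fun x => decide (i ≤ x))).length

lemma nstat_cons (i x : ℕ) (t : List ℕ) :
    nstat i (x :: t) = nstat i t + (if i ≤ x then 1 else 0) := by
  by_cases h : i ≤ x <;> simp [nstat, List.filter_cons, h]

lemma count_cons' (m x : ℕ) (t : List ℕ) :
    List.count m (x :: t) = List.count m t + (if x = m then 1 else 0) := by
  simp [List.count_cons]

lemma dstat_succ (i : ℕ) (l : List ℕ) :
    dstat i l = dstat (i+1) l + nstat (i+1) l := by
  induction l with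
  | nil => rfl
  | cons x t ih =>
      rw [dstat_cons, dstat_cons, nstat_cons, ih]
      split_ifs with h <;> omega

lemma count_add_nstat (m : ℕ) (l : List ℕ) :
    l.count (m+1) + nstat (m+2) l = nstat (m+1) l := by
  induction l with
  | nil => rfl
  | cons x t ih =>
      rw [count_cons', nstat_cons, nstat_cons]
      split_ifs with h1 h2 h3 <;> omega

/-- the `dstat` statistics determine a partition with positive parts -/
lemma eq_of_dstat {a b : List ℕ} (ha : a.Pairwise (· ≥ ·)) (hb : b.Pairwise (· ≥ ·))
    (hap : ∀ x ∈ a, 0 < x) (hbp : ∀ x ∈ b, 0 < x)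
    (h : ∀ i, dstat i a = dstat i b) : a = b := by
  have hn : ∀ i, nstat (i+1) a = nstat (i+1) b := by
    intro i
    have h1 := dstat_succ i a
    have h2 := dstat_succ i b
    have h3 := h i
    have h4 := h (i+1)
    omega
  refine List.Perm.eq_of_pairwise' ha hb (List.perm_iff_count.2 ?_)
  intro x
  cases x with
  | zero =>
      rw [List.count_eq_zero.2 (fun hx => absurd (hap 0 hx) (by omega)),
        List.count_eq_zero.2 (fun hx => absurd (hbp 0 hx) (by omega))]
  | succ m =>
      have h1 := count_add_nstat m a
      have h2 := count_add_nstat m b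
      have h3 := hn m
      have h4 : nstat (m+2) a = nstat (m+2) b := hn (m+1)
      omega


/-- The pinned condition, recalled: -/
lemma dominates_of_dstat {k : ℕ} {μ l : List ℕ} (hμ : μ.Pairwise (· ≥ ·))
    (hsum : μ.sum = l.sum) (hD : ∀ i, dstat i l ≤ dstat i μ) : Dominates μ l := by
  intro p
  rcases Nat.eq_zero_or_pos p with rfl | hp
  · simp
  by_cases hlen : μ.length ≤ p
  · rw [List.take_of_length_le hlen]
    calc (l.take p).sum ≤ l.sum := sum_take_le_sum l p
    _ = μ.sum := hsum.symm
  · push_neg at hlen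
    obtain ⟨q, rfl⟩ : ∃ q, p = q + 1 := ⟨p - 1, by omega⟩
    have hq : q < μ.length := by omega
    set i := μ[q] with hi
    have htake : ∀ x ∈ μ.take (q+1), i ≤ x := by
      intro x hx
      rw [List.mem_take_iff_getElem] at hx
      obtain ⟨m, hm, rfl⟩ := hx
      have hm' : m < μ.length := lt_of_lt_of_le hm (min_le_right _ _)
      rcases Nat.lt_or_ge m q with h | h
      · exact (List.pairwise_iff_getElem.1 hμ) m q hm' hq h
      · have : m = q := by
          have := lt_of_lt_of_le hm (min_le_left _ _); omega
        subst this; exact le_rfl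
    have hdrop : ∀ x ∈ μ.drop (q+1), x ≤ i := by
      intro x hx
      rw [List.mem_drop_iff_getElem] at hx
      obtain ⟨m, hm, rfl⟩ := hx
      exact (List.pairwise_iff_getElem.1 hμ) q (q+1+m) hq (by omega) (by omega)
    have hlent : (μ.take (q+1)).length = q + 1 := by
      rw [List.length_take]; omega
    have key : (μ.take (q+1)).sum = dstat i μ + (q+1) * i := by
      have h1 := dstat_add_of_le htake
      have h2 : dstat i μ = dstat i (μ.take (q+1)) + dstat i (μ.drop (q+1)) := by
        conv_lhs => rw [← List.take_append_drop (q+1) μ]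
        exact dstat_append i _ _
      rw [dstat_eq_zero hdrop] at h2
      rw [hlent] at h1
      omega
    have hl1 : (l.take (q+1)).sum ≤ dstat i l + (q+1) * i := by
      have h1 := sum_le_dstat_add i (l.take (q+1))
      have h2 : dstat i (l.take (q+1)) ≤ dstat i l := dstat_sublist i (List.take_sublist _ _)
      have h3 : (l.take (q+1)).length ≤ q + 1 := by
        rw [List.length_take]; omega
      have h4 : (l.take (q+1)).length * i ≤ (q+1) * i := Nat.mul_le_mul_right i h3
      omega
    calc (l.take (q+1)).sum ≤ dstat i l + (q+1) * i := hl1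
      _ ≤ dstat i μ + (q+1) * i := by have := hD i; omega
      _ = (μ.take (q+1)).sum := key.symm

lemma kbdd_nil (k : ℕ) : IsKBoundedPartition k [] :=
  ⟨⟨List.Pairwise.nil, by simp⟩, by simp⟩

lemma kbdd_sortDesc_append {k : ℕ} {a b : List ℕ}
    (ha : IsKBoundedPartition k a) (hb : IsKBoundedPartition k b) :
    IsKBoundedPartition k (sortDesc (a ++ b)) := by
  refine ⟨⟨sortDesc_sorted _, ?_⟩, ?_⟩ <;>
  · intro x hx
    rw [(sortDesc_perm _).mem_iff, List.mem_append] at hx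
    rcases hx with hx | hx
    · first
      | exact ha.1.2 x hx
      | exact ha.2 x hx
    · first
      | exact hb.1.2 x hx
      | exact hb.2 x hx

lemma sum_sortDesc_append (a b : List ℕ) : (sortDesc (a ++ b)).sum = a.sum + b.sum := by
  rw [(sortDesc_perm _).sum_eq, List.sum_append]

/-- hProd lemmas -/
lemma hProd_nil (k : ℕ) : hProd k [] = 1 := rfl

lemma hProd_cons (k : ℕ) (x : ℕ) (l : List ℕ) :
    hProd k (x :: l) = hElem k x * hProd k l := by
  simp [hProd]

lemma hProd_singleton (k j : ℕ) : hProd k [j] = hElem k j := by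
  simp [hProd]

lemma hProd_append (k : ℕ) (a b : List ℕ) :
    hProd k (a ++ b) = hProd k a * hProd k b := by
  simp [hProd]

lemma hProd_perm (k : ℕ) {a b : List ℕ} (h : a.Perm b) : hProd k a = hProd k b := by
  induction h with
  | nil => rfl
  | cons x _ ih => rw [hProd_cons, hProd_cons, ih]
  | swap x y l => rw [hProd_cons, hProd_cons, hProd_cons, hProd_cons]; ring
  | trans _ _ ih1 ih2 => rw [ih1, ih2]

lemma hProd_sortDesc (k : ℕ) (l : List ℕ) : hProd k (sortDesc l) = hProd k l :=
  hProd_perm k (sortDesc_perm l)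

lemma hElem_zero (k : ℕ) : hElem k 0 = 1 := by
  rw [hElem, dif_neg (by omega), if_pos rfl]

lemma hProd_replicate (k n j : ℕ) : hProd k (List.replicate n j) = hElem k j ^ n := by
  induction n with
  | zero => rw [List.replicate_zero, pow_zero]; rfl
  | succ n ih => rw [List.replicate_succ, hProd_cons, ih, pow_succ]; ring

lemma hProd_filter_pos (k : ℕ) (l : List ℕ) :
    hProd k (l.filter (fun x => decide (0 < x))) = hProd k l := by
  induction l with
  | nil => rfl
  | cons x t ih =>
      by_cases hx : 0 < x
      · rw [List.filter_cons, if_pos (by simpa using hx), hProd_cons, hProd_cons, ih]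
      · have : x = 0 := by omega
        subst this
        rw [List.filter_cons, if_neg (by simp), hProd_cons, ih]
        push_cast
        rw [hElem_zero, one_mul]

/-- The set of strictly dominating `k`-bounded partitions (in the `dstat` sense). -/
def Good (k : ℕ) (l : List ℕ) : Set (List ℕ) :=
  {μ | IsKBoundedPartition k μ ∧ μ.sum = l.sum ∧ (∀ i, dstat i l ≤ dstat i μ) ∧
    ∃ i, dstat i l < dstat i μ}

noncomputable def Sub (k : ℕ) (l : List ℕ) : Submodule ℚ (MvPolynomial (Fin k) ℚ) :=
  Submodule.span ℚ (hProd k '' Good k l)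

lemma good_merge {k : ℕ} {l₁ l₂ ν₁ ν₂ : List ℕ}
    (hb₁ : IsKBoundedPartition k ν₁) (hb₂ : IsKBoundedPartition k ν₂)
    (hs₁ : ν₁.sum = l₁.sum) (hs₂ : ν₂.sum = l₂.sum)
    (hw₁ : ∀ i, dstat i l₁ ≤ dstat i ν₁) (hw₂ : ∀ i, dstat i l₂ ≤ dstat i ν₂)
    (hst : (∃ i, dstat i l₁ < dstat i ν₁) ∨ ∃ i, dstat i l₂ < dstat i ν₂) :
    sortDesc (ν₁ ++ ν₂) ∈ Good k (sortDesc (l₁ ++ l₂)) := by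
  refine ⟨kbdd_sortDesc_append hb₁ hb₂, ?_, ?_, ?_⟩
  · rw [sum_sortDesc_append, sum_sortDesc_append, hs₁, hs₂]
  · intro i
    rw [dstat_sortDesc, dstat_sortDesc, dstat_append, dstat_append]
    have := hw₁ i; have := hw₂ i; omega
  · rcases hst with ⟨i, hi⟩ | ⟨i, hi⟩ <;>
    · refine ⟨i, ?_⟩
      rw [dstat_sortDesc, dstat_sortDesc, dstat_append, dstat_append]
      have := hw₁ i; have := hw₂ i; omega

lemma good_self_merge_left {k : ℕ} {l₁ l₂ ν₁ : List ℕ}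
    (hν : ν₁ ∈ Good k l₁) (hb₂ : IsKBoundedPartition k l₂) :
    sortDesc (ν₁ ++ l₂) ∈ Good k (sortDesc (l₁ ++ l₂)) :=
  good_merge hν.1 hb₂ hν.2.1 rfl hν.2.2.1 (fun _ => le_rfl) (Or.inl hν.2.2.2)

lemma mul_hProd_mem {k : ℕ} {l₁ l₂ : List ℕ} (hb₂ : IsKBoundedPartition k l₂)
    {q : MvPolynomial (Fin k) ℚ} (hq : q ∈ Sub k l₁) :
    q * hProd k l₂ ∈ Sub k (sortDesc (l₁ ++ l₂)) := by
  have hle : Sub k l₁ ≤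
      (Sub k (sortDesc (l₁ ++ l₂))).comap (LinearMap.mulRight ℚ (hProd k l₂)) := by
    rw [Sub, Submodule.span_le]
    rintro x ⟨ν, hν, rfl⟩
    simp only [Set.mem_setOf_eq, SetLike.mem_coe, Submodule.mem_comap,
      LinearMap.mulRight_apply]
    have : hProd k ν * hProd k l₂ = hProd k (sortDesc (ν ++ l₂)) := by
      rw [hProd_sortDesc, hProd_append]
    rw [this]
    exact Submodule.subset_span ⟨_, good_self_merge_left hν hb₂, rfl⟩
  exact hle hq

lemma hProd_mul_mem {k : ℕ} {l₁ l₂ : List ℕ} (hb₁ : IsKBoundedPartition k l₁)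
    {q : MvPolynomial (Fin k) ℚ} (hq : q ∈ Sub k l₂) :
    hProd k l₁ * q ∈ Sub k (sortDesc (l₁ ++ l₂)) := by
  rw [mul_comm, sortDesc_append_comm]
  exact mul_hProd_mem hb₁ hq

lemma mul_mem_sub {k : ℕ} {l₁ l₂ : List ℕ} {q₁ q₂ : MvPolynomial (Fin k) ℚ}
    (hq₁ : q₁ ∈ Sub k l₁) (hq₂ : q₂ ∈ Sub k l₂) :
    q₁ * q₂ ∈ Sub k (sortDesc (l₁ ++ l₂)) := by
  have hle : Sub k l₁ ≤
      (Sub k (sortDesc (l₁ ++ l₂))).comap (LinearMap.mulRight ℚ q₂) := by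
    rw [Sub, Submodule.span_le]
    rintro x ⟨ν₁, hν₁, rfl⟩
    simp only [Set.mem_setOf_eq, SetLike.mem_coe, Submodule.mem_comap,
      LinearMap.mulRight_apply]
    have hle2 : Sub k l₂ ≤
        (Sub k (sortDesc (l₁ ++ l₂))).comap (LinearMap.mulLeft ℚ (hProd k ν₁)) := by
      rw [Sub, Submodule.span_le]
      rintro y ⟨ν₂, hν₂, rfl⟩
      simp only [Set.mem_setOf_eq, SetLike.mem_coe, Submodule.mem_comap,
        LinearMap.mulLeft_apply]
      have : hProd k ν₁ * hProd k ν₂ = hProd k (sortDesc (ν₁ ++ ν₂)) := by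
        rw [hProd_sortDesc, hProd_append]
      rw [this]
      exact Submodule.subset_span
        ⟨_, good_merge hν₁.1 hν₂.1 hν₁.2.1 hν₂.2.1 hν₁.2.2.1 hν₂.2.2.1
          (Or.inl hν₁.2.2.2), rfl⟩
    exact hle2 hq₂
  exact hle hq₁

/-- triangular representation relative to sorted `k`-bounded `l` -/
def TRep (k : ℕ) (l : List ℕ) (p : MvPolynomial (Fin k) ℚ) : Prop :=
  IsKBoundedPartition k l ∧ p - hProd k l ∈ Sub k l

lemma TRep_one (k : ℕ) : TRep k [] 1 :=
  ⟨kbdd_nil k, by rw [hProd_nil, sub_self]; exact Submodule.zero_mem _⟩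

lemma TRep_mul {k : ℕ} {l₁ l₂ : List ℕ} {p₁ p₂ : MvPolynomial (Fin k) ℚ}
    (h₁ : TRep k l₁ p₁) (h₂ : TRep k l₂ p₂) :
    TRep k (sortDesc (l₁ ++ l₂)) (p₁ * p₂) := by
  obtain ⟨hb₁, hq₁⟩ := h₁
  obtain ⟨hb₂, hq₂⟩ := h₂
  refine ⟨kbdd_sortDesc_append hb₁ hb₂, ?_⟩
  have key : p₁ * p₂ - hProd k (sortDesc (l₁ ++ l₂)) =
      (p₁ - hProd k l₁) * hProd k l₂ + hProd k l₁ * (p₂ - hProd k l₂) +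
      (p₁ - hProd k l₁) * (p₂ - hProd k l₂) := by
    rw [hProd_sortDesc, hProd_append]; ring
  rw [key]
  exact add_mem (add_mem (mul_hProd_mem hb₂ hq₁) (hProd_mul_mem hb₁ hq₂))
    (mul_mem_sub hq₁ hq₂)

lemma TRep_hElem {k j : ℕ} (h1 : 1 ≤ j) (hk : j ≤ k) : TRep k [j] (hElem k j) := by
  refine ⟨⟨⟨List.pairwise_singleton _ j, ?_⟩, ?_⟩, ?_⟩
  · intro x hx; rw [List.mem_singleton] at hx; omega
  · intro x hx; rw [List.mem_singleton] at hx; omega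
  · rw [hProd_singleton, sub_self]; exact Submodule.zero_mem _

lemma hProd_eq_prod (k : ℕ) (l : List ℕ) :
    hProd k l = (l.map (fun m : ℕ => hElem k (m : ℤ))).prod := by
  induction l with
  | nil => rfl
  | cons x t ih => rw [hProd_cons, List.map_cons, List.prod_cons, ih]

lemma sum_replicate_nat (n j : ℕ) : (List.replicate n j).sum = n * j := by
  rw [List.sum_replicate, smul_eq_mul]

lemma TRep_rectSchur {k j : ℕ} (h1 : 1 ≤ j) (hjk : j ≤ k) :
    TRep k (List.replicate (k + 1 - j) j) (rectSchur k j) := by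
  have hbrect : IsKBoundedPartition k (List.replicate (k + 1 - j) j) := by
    refine ⟨⟨List.pairwise_replicate.2 (Or.inr le_rfl), ?_⟩, ?_⟩
    · intro x hx; rw [List.eq_of_mem_replicate hx]; omega
    · intro x hx; rw [List.eq_of_mem_replicate hx]; omega
  refine ⟨hbrect, ?_⟩
  rw [rectSchur, Matrix.det_apply,
    ← Finset.add_sum_erase _ _ (Finset.mem_univ (1 : Equiv.Perm (Fin (k + 1 - j))))]
  have hone : (Equiv.Perm.sign (1 : Equiv.Perm (Fin (k + 1 - j)))) •
      (∏ i : Fin (k + 1 - j), Matrix.of (fun i j' : Fin (k + 1 - j) =>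
        hElem k ((j : ℤ) - (((i : ℕ) : ℤ) + 1) + (((j' : ℕ) : ℤ) + 1))) ((1 : Equiv.Perm (Fin (k + 1 - j))) i) i)
      = hProd k (List.replicate (k + 1 - j) j) := by
    rw [Equiv.Perm.sign_one, one_smul, hProd_replicate]
    rw [show (∏ i : Fin (k + 1 - j), Matrix.of (fun i j' : Fin (k + 1 - j) =>
        hElem k ((j : ℤ) - (((i : ℕ) : ℤ) + 1) + (((j' : ℕ) : ℤ) + 1))) ((1 : Equiv.Perm (Fin (k + 1 - j))) i) i)
        = ∏ _i : Fin (k + 1 - j), hElem k (j : ℤ) from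
      Finset.prod_congr rfl (fun i _ => by
        rw [Equiv.Perm.one_apply, Matrix.of_apply]
        congr 1
        ring)]
    rw [Finset.prod_const, Finset.card_univ, Fintype.card_fin]
  rw [hone, add_sub_cancel_left]
  refine Submodule.sum_mem _ (fun σ hσ => ?_)
  have hσ1 : σ ≠ 1 := (Finset.mem_erase.1 hσ).1
  -- main claim: the unsigned product lies in Sub
  have main : (∏ i : Fin (k + 1 - j), Matrix.of (fun i j' : Fin (k + 1 - j) =>
      hElem k ((j : ℤ) - (((i : ℕ) : ℤ) + 1) + (((j' : ℕ) : ℤ) + 1))) (σ i) i)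
      ∈ Sub k (List.replicate (k + 1 - j) j) := by
    by_cases hng : ∀ i : Fin (k + 1 - j), (σ i : ℕ) ≤ j + (i : ℕ)
    · -- all entries are nonnegative
      set v : Fin (k + 1 - j) → ℕ := fun i => j + (i : ℕ) - (σ i : ℕ) with hv
      have hvle : ∀ i : Fin (k + 1 - j), v i ≤ k := by
        intro i
        have := hng i
        have hi : (i : ℕ) < k + 1 - j := i.isLt
        simp only [hv]
        omega
      have hentry : ∀ i : Fin (k + 1 - j), Matrix.of (fun i j' : Fin (k + 1 - j) =>
          hElem k ((j : ℤ) - (((i : ℕ) : ℤ) + 1) + (((j' : ℕ) : ℤ) + 1))) (σ i) i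
          = hElem k ((v i : ℕ) : ℤ) := by
        intro i
        rw [Matrix.of_apply]
        congr 1
        have := hng i
        simp only [hv]
        omega
      set L0 : List ℕ := (List.finRange (k + 1 - j)).map v with hL0
      have hprod : (∏ i : Fin (k + 1 - j), Matrix.of (fun i j' : Fin (k + 1 - j) =>
          hElem k ((j : ℤ) - (((i : ℕ) : ℤ) + 1) + (((j' : ℕ) : ℤ) + 1))) (σ i) i)
          = hProd k L0 := by
        rw [Finset.prod_congr rfl (fun i _ => hentry i), hProd_eq_prod, hL0,
          List.map_map, Fin.prod_univ_def]
        rfl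
      have hL0len : L0.length = k + 1 - j := by
        rw [hL0, List.length_map, List.length_finRange]
      have hL0sum : L0.sum = (k + 1 - j) * j := by
        have hcast : ((L0.sum : ℕ) : ℤ) = ((k + 1 - j : ℕ) : ℤ) * (j : ℤ) := by
          have e1 : L0.sum = ∑ i : Fin (k + 1 - j), v i := by
            rw [hL0, Fin.sum_univ_def]
          rw [e1, Nat.cast_sum]
          have e2 : ∀ i : Fin (k + 1 - j), ((v i : ℕ) : ℤ)
              = ((j : ℕ) : ℤ) + ((i : ℕ) : ℤ) - ((σ i : ℕ) : ℤ) := by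
            intro i; have := hng i; simp only [hv]; omega
          rw [Finset.sum_congr rfl (fun i _ => e2 i)]
          rw [Finset.sum_sub_distrib, Finset.sum_add_distrib,
            Equiv.sum_comp σ (fun i : Fin (k + 1 - j) => ((i : ℕ) : ℤ))]
          rw [Finset.sum_const, Finset.card_univ, Fintype.card_fin]
          push_cast
          ring
        exact_mod_cast hcast
      set F : List ℕ := L0.filter (fun x => decide (0 < x)) with hF
      set Lσ : List ℕ := sortDesc F with hLσ
      have hprod2 : hProd k L0 = hProd k Lσ := by
        rw [hLσ, hProd_sortDesc, hF, hProd_filter_pos]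
      have hFsum : Lσ.sum = L0.sum := by
        rw [hLσ, (sortDesc_perm F).sum_eq, hF, sum_filter_pos]
      have hFd : ∀ i, dstat i Lσ = dstat i L0 := by
        intro i; rw [hLσ, dstat_sortDesc, hF, dstat_filter_pos]
      have hgood : Lσ ∈ Good k (List.replicate (k + 1 - j) j) := by
        refine ⟨⟨⟨sortDesc_sorted _, ?_⟩, ?_⟩, ?_, ?_, ?_⟩
        · intro x hx
          rw [hLσ, (sortDesc_perm F).mem_iff, hF, List.mem_filter] at hx
          simpa using hx.2
        · intro x hx
          rw [hLσ, (sortDesc_perm F).mem_iff, hF, List.mem_filter] at hx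
          obtain ⟨i, _, rfl⟩ := List.mem_map.1 hx.1
          exact hvle i
        · rw [hFsum, hL0sum, sum_replicate_nat]
        · intro i
          rw [hFd, dstat_replicate]
          have hS := sum_le_dstat_add i L0
          rw [hL0sum, hL0len] at hS
          by_cases hij : i ≤ j
          · have he : (k + 1 - j) * (j - i) + (k + 1 - j) * i = (k + 1 - j) * j := by
              rw [← Nat.mul_add]; congr 1; omega
            omega
          · have he : j - i = 0 := by omega
            rw [he]; simp
        · by_contra hcon
          push_neg at hcon
          have hweak : ∀ i, dstat i (List.replicate (k + 1 - j) j) ≤ dstat i Lσ := by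
            intro i
            rw [hFd, dstat_replicate]
            have hS := sum_le_dstat_add i L0
            rw [hL0sum, hL0len] at hS
            by_cases hij : i ≤ j
            · have he : (k + 1 - j) * (j - i) + (k + 1 - j) * i = (k + 1 - j) * j := by
                rw [← Nat.mul_add]; congr 1; omega
              omega
            · have he : j - i = 0 := by omega
              rw [he]; simp
          have heqd : ∀ i, dstat i Lσ = dstat i (List.replicate (k + 1 - j) j) := by
            intro i; have := hcon i; have := hweak i; omega
          have heq : Lσ = List.replicate (k + 1 - j) j := by
            refine eq_of_dstat (by rw [hLσ]; exact sortDesc_sorted _)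
              (List.pairwise_replicate.2 (Or.inr le_rfl)) ?_ ?_ heqd
            · intro x hx
              rw [hLσ, (sortDesc_perm F).mem_iff, hF, List.mem_filter] at hx
              simpa using hx.2
            · intro x hx; rw [List.eq_of_mem_replicate hx]; omega
          -- derive σ = 1
          have hlen : F.length = L0.length := by
            have e1 : Lσ.length = F.length := (sortDesc_perm F).length_eq
            rw [heq] at e1
            rw [← e1, List.length_replicate, hL0len]
          have hFL0 : F = L0 := (List.filter_sublist (l := L0)).eq_of_length hlen
          have hperm : L0.Perm (List.replicate (k + 1 - j) j) := by
            rw [← heq, hLσ]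
            rw [← hFL0]
            exact (sortDesc_perm F).symm
          have hvall : ∀ i : Fin (k + 1 - j), v i = j := by
            intro i
            have hmem : v i ∈ L0 := by
              rw [hL0]; exact List.mem_map_of_mem (f := v) (List.mem_finRange i)
            exact List.eq_of_mem_replicate (hperm.mem_iff.1 hmem)
          have : σ = 1 := by
            refine Equiv.ext (fun i => ?_)
            have h1 := hvall i
            have h2 := hng i
            simp only [hv] at h1
            rw [Equiv.Perm.one_apply]
            exact Fin.ext (by omega)
          exact hσ1 this
      rw [hprod, hprod2]
      exact Submodule.subset_span ⟨Lσ, hgood, rfl⟩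
    · -- some entry is negative, the product vanishes
      push_neg at hng
      obtain ⟨i0, hi0⟩ := hng
      have hzero : Matrix.of (fun i j' : Fin (k + 1 - j) =>
          hElem k ((j : ℤ) - (((i : ℕ) : ℤ) + 1) + (((j' : ℕ) : ℤ) + 1))) (σ i0) i0 = 0 := by
        rw [Matrix.of_apply, hElem, dif_neg (by omega), if_neg (by omega)]
      have hpz : (∏ i : Fin (k + 1 - j), Matrix.of (fun i j' : Fin (k + 1 - j) =>
          hElem k ((j : ℤ) - (((i : ℕ) : ℤ) + 1) + (((j' : ℕ) : ℤ) + 1))) (σ i) i) = 0 :=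
        Finset.prod_eq_zero (Finset.mem_univ i0) hzero
      rw [hpz]
      exact Submodule.zero_mem _
  rcases Int.units_eq_one_or (Equiv.Perm.sign σ) with hs | hs
  · rw [hs, one_smul]; exact main
  · rw [hs, Units.smul_def, Units.val_neg, Units.val_one, neg_smul, one_smul]
    exact Submodule.neg_mem _ main


lemma coe_sortDesc_append (a b : List ℕ) :
    ((sortDesc (a ++ b) : List ℕ) : Multiset ℕ) = (a : Multiset ℕ) + (b : Multiset ℕ) := by
  rw [Multiset.coe_eq_coe.2 (sortDesc_perm _)]
  rfl

lemma prod_TRep (k : ℕ) (s : Finset ℕ) (F : ℕ → MvPolynomial (Fin k) ℚ)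
    (g : ℕ → Multiset ℕ) (h : ∀ j ∈ s, ∃ L, TRep k L (F j) ∧ (L : Multiset ℕ) = g j) :
    ∃ L, TRep k L (∏ j ∈ s, F j) ∧ (L : Multiset ℕ) = ∑ j ∈ s, g j := by
  induction s using Finset.induction_on with
  | empty => exact ⟨[], by simpa using TRep_one k, by simp⟩
  | insert a s ha ih =>
      obtain ⟨La, hLa, hga⟩ := h a (Finset.mem_insert_self a s)
      obtain ⟨Ls, hLs, hgs⟩ := ih (fun j hj => h j (Finset.mem_insert_of_mem hj))
      refine ⟨sortDesc (La ++ Ls), ?_, ?_⟩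
      · rw [Finset.prod_insert ha]; exact TRep_mul hLa hLs
      · rw [Finset.sum_insert ha, ← hga, ← hgs, coe_sortDesc_append]

lemma pow_TRep {k : ℕ} {l : List ℕ} {p : MvPolynomial (Fin k) ℚ}
    (h : TRep k l p) (n : ℕ) :
    ∃ L, TRep k L (p ^ n) ∧ (L : Multiset ℕ) = n • (l : Multiset ℕ) := by
  obtain ⟨L, hL, hLs⟩ := prod_TRep k (Finset.range n) (fun _ => p)
    (fun _ => (l : Multiset ℕ)) (fun j _ => ⟨l, h, rfl⟩)
  exact ⟨L, by rwa [Finset.prod_const, Finset.card_range] at hL,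
    by rwa [Finset.sum_const, Finset.card_range] at hLs⟩

lemma factor_TRep {k j : ℕ} (h1 : 1 ≤ j) (hjk : j ≤ k) (c : ℕ) :
    ∃ L, TRep k L (rectSchur k j ^ (c / (k + 1 - j)) * hElem k (j : ℤ) ^ (c % (k + 1 - j))) ∧
      (L : Multiset ℕ) = Multiset.replicate c j := by
  obtain ⟨L₁, hL₁, hs₁⟩ := pow_TRep (TRep_rectSchur h1 hjk) (c / (k + 1 - j))
  obtain ⟨L₂, hL₂, hs₂⟩ := pow_TRep (TRep_hElem h1 hjk) (c % (k + 1 - j))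
  refine ⟨sortDesc (L₁ ++ L₂), TRep_mul hL₁ hL₂, ?_⟩
  rw [coe_sortDesc_append, hs₁, hs₂, Multiset.coe_replicate,
    Multiset.nsmul_replicate]
  have hsing : ((([j] : List ℕ)) : Multiset ℕ) = Multiset.replicate 1 j := rfl
  rw [hsing, Multiset.nsmul_replicate, ← Multiset.replicate_add]
  congr 1
  rw [mul_one]
  exact Nat.div_add_mod' c (k + 1 - j)

end HT

open HT in
/-- For every `k`-bounded partition `λ` of an integer `N`, the
element `~h_λ` satisfies `~h_λ = h_λ + Σ_{μ > λ} d_{μλ} h_μ` for some rational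
coefficients `d_{μλ}`, the sum running over `k`-bounded partitions `μ` of `N`
strictly greater than `λ` in dominance order. -/
theorem hTilde_triangular (k : ℕ) (hk : 0 < k) (l : List ℕ)
    (hl : IsKBoundedPartition k l) :
    ∃ (s : Finset (List ℕ)) (d : List ℕ → ℚ),
      (∀ μ ∈ s, IsKBoundedPartition k μ ∧ μ.sum = l.sum ∧ Dominates μ l ∧ μ ≠ l) ∧
      hTilde k l = hProd k l + ∑ μ ∈ s, d μ • hProd k μ := by
  obtain ⟨L, hL, hLs⟩ := prod_TRep k (Finset.Icc 1 k)
    (fun j => rectSchur k j ^ (l.count j / (k + 1 - j)) *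
      hElem k (j : ℤ) ^ (l.count j % (k + 1 - j)))
    (fun j => Multiset.replicate (l.count j) j)
    (fun j hj => by
      rw [Finset.mem_Icc] at hj
      exact factor_TRep hj.1 hj.2 (l.count j))
  have hmult : (L : Multiset ℕ) = (l : Multiset ℕ) := by
    rw [hLs]
    ext x
    rw [Multiset.count_sum']
    simp only [Multiset.count_replicate]
    rw [Finset.sum_ite_eq' (Finset.Icc 1 k) x (fun j => l.count j)]
    rw [Multiset.coe_count]
    by_cases hx : x ∈ Finset.Icc 1 k
    · rw [if_pos hx]
    · rw [if_neg hx]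
      rw [Finset.mem_Icc] at hx
      refine (List.count_eq_zero.2 (fun hxl => ?_)).symm
      exact hx ⟨hl.1.2 x hxl, hl.2 x hxl⟩
  have hLl : L = l :=
    List.Perm.eq_of_pairwise' hL.1.1.1 hl.1.1 (Multiset.coe_eq_coe.1 hmult)
  rw [hLl] at hL
  have hmem : hTilde k l - hProd k l ∈ Sub k l := by
    have : hTilde k l = ∏ j ∈ Finset.Icc 1 k,
        rectSchur k j ^ (l.count j / (k + 1 - j)) *
          hElem k (j : ℤ) ^ (l.count j % (k + 1 - j)) := rfl
    rw [this]
    exact hL.2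
  rw [HT.Sub, Submodule.mem_span_set'] at hmem
  obtain ⟨n, f, g, hsum⟩ := hmem
  have hchoice : ∀ i : Fin n, ∃ ν, ν ∈ Good k l ∧ hProd k ν = (g i : MvPolynomial (Fin k) ℚ) :=
    fun i => (g i).2
  choose μ hμgood hμeq using hchoice
  classical
  refine ⟨Finset.image μ Finset.univ, fun ν => ∑ i ∈ Finset.univ.filter (fun i => μ i = ν), f i,
    ?_, ?_⟩
  · intro ν hν
    obtain ⟨i, _, rfl⟩ := Finset.mem_image.1 hν
    obtain ⟨hb, hsml, hw, hst⟩ := hμgood i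
    refine ⟨hb, hsml, dominates_of_dstat (k := k) hb.1.1 hsml hw, ?_⟩
    rintro rfl
    obtain ⟨i', hi'⟩ := hst
    exact absurd hi' (lt_irrefl _)
  · have hsum2 : ∑ ν ∈ Finset.image μ Finset.univ,
        (∑ i ∈ Finset.univ.filter (fun i => μ i = ν), f i) • hProd k ν
        = ∑ i : Fin n, f i • hProd k (μ i) := by
      refine Finset.sum_image' _ (fun c _ => ?_)
      rw [Finset.sum_smul]
      refine Finset.sum_congr rfl (fun i hi => ?_)
      rw [(Finset.mem_filter.1 hi).2]
    rw [hsum2]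
    have hsum3 : ∑ i : Fin n, f i • hProd k (μ i) = hTilde k l - hProd k l := by
      rw [← hsum]
      exact Finset.sum_congr rfl (fun i _ => by rw [hμeq i])
    rw [hsum3]
    ring
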